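/- For every nonnegative integer k and all nonzero complex numbers a, b, a′, b′, the recurrence g_{k+1,0}(a,b,a′,b′) = ((b+b′)/(k+1))·g_{k,0}(a,b,a′,b′) holds (both series converging absolutely). -/

import Mathlib

open scoped BigOperators

/-- Generalized Laguerre polynomial `L_n^m(x) = Σ_{q=0}^n C(n+m, n−q)·(−x)^q/q!`. -/
noncomputable def lag (n m : ℕ) (x : ℂ) : ℂ :=
  ∑ q ∈ Finset.range (n + 1), ((n + m).choose (n - q) : ℂ) * (-x) ^ q / (q.factorial : ℂ)

/-- The `j`-th term of the series defining `g_{kl}(a,b,a′,b′)`. -/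
noncomputable def gTerm (k l : ℕ) (a b a' b' : ℂ) (j : ℕ) : ℂ :=
  (j.factorial : ℂ) * (a * b') ^ j *
    ((a * b) ^ (-(min k j : ℤ)) / ((max k j).factorial : ℂ)) *
      lag (min k j) (Nat.dist k j) (-(a * b)) *
    ((a' * b') ^ (-(min l j : ℤ)) / ((max l j).factorial : ℂ)) *
      lag (min l j) (Nat.dist l j) (-(a' * b'))

/-- `g_{kl}(a,b,a′,b′)`. -/
noncomputable def gkl (k l : ℕ) (a b a' b' : ℂ) : ℂ :=
  a' ^ l * b ^ k * ∑' j : ℕ, gTerm k l a b a' b' j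

lemma lag_zero (m : ℕ) (x : ℂ) : lag 0 m x = 1 := by simp [lag]

-- Pascal-type: L_{n+1}^{m+1} = L_{n+1}^m + L_n^{m+1}
lemma lag_A (n m : ℕ) (x : ℂ) :
    lag (n+1) (m+1) x = lag (n+1) m x + lag n (m+1) x := by
  unfold lag
  rw [Finset.sum_range_succ, Finset.sum_range_succ (n := n + 1)]
  have h : ∀ q ∈ Finset.range (n+1),
      ((n+1+(m+1)).choose (n+1-q) : ℂ) * (-x)^q / (q.factorial : ℂ)
      = ((n+1+m).choose (n+1-q) : ℂ) * (-x)^q / (q.factorial : ℂ)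
        + ((n+(m+1)).choose (n-q) : ℂ) * (-x)^q / (q.factorial : ℂ) := by
    intro q hq
    rw [Finset.mem_range] at hq
    have h1 : n + 1 - q = (n - q) + 1 := by omega
    have h2 : n + 1 + (m + 1) = (n + 1 + m) + 1 := by ring
    have h3 : n + 1 + m = n + (m+1) := by ring
    rw [h1, h2, Nat.choose_succ_succ, h3]
    push_cast
    ring
  rw [Finset.sum_congr rfl h, Finset.sum_add_distrib]
  simp
  ring

lemma lag_B (n m : ℕ) (y : ℂ) :
    ((n : ℂ) + 1) * lag (n+1) m y
      = ((n : ℂ) + (m : ℂ) + 1) * lag n m y - y * lag n (m+1) y := by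
  unfold lag
  rw [Finset.mul_sum, Finset.mul_sum]
  rw [Finset.sum_range_succ' (fun q => ((n:ℂ)+1) * (((n+1+m).choose (n+1-q) : ℂ) * (-y)^q / (q.factorial : ℂ))) (n+1)]
  rw [Finset.sum_range_succ (fun q => ((n:ℂ)+1) * (((n+1+m).choose (n+1-(q+1)) : ℂ) * (-y)^(q+1) / ((q+1).factorial : ℂ))) n]
  rw [Finset.sum_range_succ' (fun q => ((n:ℂ)+(m:ℂ)+1) * (((n+m).choose (n-q) : ℂ) * (-y)^q / (q.factorial : ℂ))) n]
  rw [show Finset.range (n+1) = Finset.range (n+1) from rfl]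
  conv_rhs => rw [Finset.sum_range_succ (fun q => ((n+(m+1)).choose (n-q) : ℂ) * (-y)^q / (q.factorial : ℂ)) n]
  have hsum : ∀ q ∈ Finset.range n,
      ((n:ℂ)+1) * (((n+1+m).choose (n+1-(q+1)) : ℂ) * (-y)^(q+1) / ((q+1).factorial : ℂ))
      = ((n:ℂ)+(m:ℂ)+1) * (((n+m).choose (n-(q+1)) : ℂ) * (-y)^(q+1) / ((q+1).factorial : ℂ))
        - y * (((n+(m+1)).choose (n-q) : ℂ) * (-y)^q / (q.factorial : ℂ)) := by
    intro q hq
    rw [Finset.mem_range] at hq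
    have h2 : (n - q) * (n+1+m).choose (n-q) = (n+m+1) * (n+m).choose (n-q-1) := by
      have h := Nat.add_one_mul_choose_eq (n+m) (n-q-1)
      have h3 : n - q - 1 + 1 = n - q := by omega
      have h4 : n + m + 1 = n + 1 + m := by omega
      rw [h3, h4] at h
      rw [show n + m + 1 = n + 1 + m from h4, h]
      exact Nat.mul_comm _ _
    have h2c : ((n:ℂ)-(q:ℂ)) * ((n+1+m).choose (n-q) : ℂ)
        = ((n:ℂ)+(m:ℂ)+1) * ((n+m).choose (n-q-1) : ℂ) := by
      have hc := congrArg (Nat.cast (R := ℂ)) h2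
      push_cast [Nat.cast_sub (le_of_lt hq)] at hc
      convert hc using 2 <;> push_cast <;> ring
    have h1 : n + 1 - (q + 1) = n - q := by omega
    have h6 : n - (q+1) = n - q - 1 := by omega
    have h5 : n + (m+1) = n+1+m := by ring
    have hfac : ((q+1).factorial : ℂ) = ((q:ℂ)+1) * (q.factorial : ℂ) := by
      push_cast [Nat.factorial_succ]; ring
    rw [h1, h5, h6, hfac]
    have hq0 : (q.factorial : ℂ) ≠ 0 := Nat.cast_ne_zero.2 q.factorial_ne_zero
    have hq1 : ((q:ℂ)+1) ≠ 0 := by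
      have : ((q:ℂ)+1) = ((q+1 : ℕ) : ℂ) := by push_cast; ring
      rw [this]; exact Nat.cast_ne_zero.2 (Nat.succ_ne_zero q)
    field_simp
    linear_combination ((-y)^(q+1)) * h2c
  rw [Finset.sum_congr rfl hsum, Finset.sum_sub_distrib]
  have htop : ((n:ℂ)+1) * (((n+1+m).choose (n+1-(n+1)) : ℂ) * (-y)^(n+1) / ((n+1).factorial : ℂ))
      = - (((n+(m+1)).choose (n-n) : ℂ) * (-y)^n / (n.factorial : ℂ)) * y := by
    simp only [Nat.sub_self, Nat.choose_zero_right, Nat.cast_one]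
    have hfac : ((n+1).factorial : ℂ) = ((n:ℂ)+1) * (n.factorial : ℂ) := by
      push_cast [Nat.factorial_succ]; ring
    rw [hfac]
    have hn0 : (n.factorial : ℂ) ≠ 0 := Nat.cast_ne_zero.2 n.factorial_ne_zero
    have hn1 : ((n:ℂ)+1) ≠ 0 := by
      have : ((n:ℂ)+1) = ((n+1 : ℕ) : ℂ) := by push_cast; ring
      rw [this]; exact Nat.cast_ne_zero.2 (Nat.succ_ne_zero n)
    field_simp
    ring
  have h0 : ((n:ℂ)+1) * (((n+1+m).choose (n+1-0) : ℂ) * (-y)^0 / ((0:ℕ).factorial : ℂ))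
      = ((n:ℂ)+(m:ℂ)+1) * (((n+m).choose (n-0) : ℂ) * (-y)^0 / ((0:ℕ).factorial : ℂ)) := by
    simp only [Nat.sub_zero, pow_zero, Nat.factorial_zero, Nat.cast_one, mul_one, div_one]
    have h := Nat.add_one_mul_choose_eq (n+m) n
    have hc := congrArg (Nat.cast (R := ℂ)) h
    push_cast at hc
    have h4 : (n:ℂ) + (m:ℂ) + 1 = ((n+m+1 : ℕ) : ℂ) := by push_cast; ring
    have h5 : n + m + 1 = n + 1 + m := by omega
    rw [show n+1+m = n+m+1 from h5.symm]
    linear_combination (-1 : ℂ) * hc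
  rw [htop, h0, mul_add, Finset.mul_sum]
  ring

lemma gTerm_zero (k j : ℕ) (a b a' b' : ℂ) :
    gTerm k 0 a b a' b' j
      = (a * b') ^ j * (a * b) ^ (-(min k j : ℤ)) *
          lag (min k j) (Nat.dist k j) (-(a * b)) / ((max k j).factorial : ℂ) := by
  unfold gTerm
  have hd : Nat.dist 0 j = j := Nat.dist_zero_left j
  have hj : ((j.factorial : ℂ)) ≠ 0 := Nat.cast_ne_zero.2 j.factorial_ne_zero
  have hm : ((max k j).factorial : ℂ) ≠ 0 := Nat.cast_ne_zero.2 (max k j).factorial_ne_zero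
  have h0 : min 0 j = 0 := Nat.le_antisymm (Nat.min_le_left 0 j) (Nat.zero_le _)
  have h1 : max 0 j = j := max_eq_right (Nat.zero_le j)
  rw [h0, h1, hd, lag_zero]
  simp only [Nat.cast_zero, neg_zero, zpow_zero, one_mul, mul_one]
  have hz : min (0:ℤ) (j:ℤ) = 0 := min_eq_left (Int.natCast_nonneg j)
  simp only [hz, neg_zero, zpow_zero, mul_one]
  generalize (a * b) ^ (-(min k j : ℤ)) = G
  generalize lag (min k j) (Nat.dist k j) (-(a*b)) = L
  field_simp [hj, hm]

section step
variable (k : ℕ) (a b a' b' : ℂ)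

lemma step0 : ((k:ℂ)+1) * (a*b) * gTerm (k+1) 0 a b a' b' 0
    = (a*b) * gTerm k 0 a b a' b' 0 := by
  rw [gTerm_zero, gTerm_zero]
  have h1 : min (k+1) 0 = 0 := Nat.min_eq_right (Nat.zero_le _)
  have h2 : max (k+1) 0 = k+1 := Nat.max_eq_left (Nat.zero_le _)
  have h3 : min k 0 = 0 := Nat.min_eq_right (Nat.zero_le _)
  have h4 : max k 0 = k := Nat.max_eq_left (Nat.zero_le _)
  rw [h1, h2, h3, h4, lag_zero, lag_zero]
  have hfac : (((k+1).factorial : ℕ) : ℂ) = ((k:ℂ)+1) * (k.factorial : ℂ) := by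
    push_cast [Nat.factorial_succ]; ring
  have hk : ((k.factorial : ℕ) : ℂ) ≠ 0 := Nat.cast_ne_zero.2 k.factorial_ne_zero
  have hk1 : ((k:ℂ)+1) ≠ 0 := by
    have : ((k:ℂ)+1) = ((k+1 : ℕ) : ℂ) := by push_cast; ring
    rw [this]; exact Nat.cast_ne_zero.2 (Nat.succ_ne_zero k)
  rw [hfac]
  push_cast
  have e1 : ((k:ℤ)+1) ⊓ 0 = 0 := by omega
  have e2 : (k:ℤ) ⊓ 0 = 0 := by omega
  rw [e1, e2]
  simp only [neg_zero, zpow_zero, pow_zero, one_mul, mul_one]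
  field_simp

lemma stepS (ha : a ≠ 0) (hb : b ≠ 0) (j : ℕ) : ((k:ℂ)+1) * (a*b) * gTerm (k+1) 0 a b a' b' (j+1)
    = (a*b) * gTerm k 0 a b a' b' (j+1) + (a*b') * gTerm k 0 a b a' b' j := by
  have hx : a * b ≠ 0 := mul_ne_zero ha hb
  rw [gTerm_zero, gTerm_zero, gTerm_zero]
  rcases lt_or_ge j k with hjk | hjk
  · -- j < k : use lag_A
    have h1 : min (k+1) (j+1) = j+1 := by omega
    have h2 : max (k+1) (j+1) = k+1 := by omega
    have h3 : min k (j+1) = j+1 := by omega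
    have h4 : max k (j+1) = k := by omega
    have h5 : min k j = j := by omega
    have h6 : max k j = k := by omega
    have hd1 : Nat.dist (k+1) (j+1) = (k-j-1)+1 := by rw [Nat.dist]; omega
    have hd2 : Nat.dist k (j+1) = k-j-1 := by rw [Nat.dist]; omega
    have hd3 : Nat.dist k j = (k-j-1)+1 := by rw [Nat.dist]; omega
    rw [h1, h2, h3, h4, h5, h6, hd1, hd2, hd3]
    rw [lag_A (j) (k-j-1) (-(a*b))]
    have hfac : (((k+1).factorial : ℕ) : ℂ) = ((k:ℂ)+1) * (k.factorial : ℂ) := by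
      push_cast [Nat.factorial_succ]; ring
    rw [hfac]
    have hk : ((k.factorial : ℕ) : ℂ) ≠ 0 := Nat.cast_ne_zero.2 k.factorial_ne_zero
    have hk1 : ((k:ℂ)+1) ≠ 0 := by
      have : ((k:ℂ)+1) = ((k+1 : ℕ) : ℂ) := by push_cast; ring
      rw [this]; exact Nat.cast_ne_zero.2 (Nat.succ_ne_zero k)
    push_cast
    have e1 : min ((k:ℤ)+1) ((j:ℤ)+1) = (j:ℤ)+1 := by omega
    have e2 : min ((k:ℤ)) ((j:ℤ)+1) = (j:ℤ)+1 := by omega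
    have e3 : min ((k:ℤ)) ((j:ℤ)) = (j:ℤ) := by omega
    rw [e1, e2, e3]
    rw [show (-((j:ℤ)+1)) = (-(j:ℤ)) + (-1) by ring, zpow_add₀ hx, zpow_neg_one]
    have hP : (a*b) ^ (-(j:ℤ)) ≠ 0 := zpow_ne_zero _ hx
    generalize hPd : (a*b) ^ (-(j:ℤ)) = P at hP ⊢
    field_simp
    ring
  · -- k ≤ j : use lag_B
    have h1 : min (k+1) (j+1) = k+1 := by omega
    have h2 : max (k+1) (j+1) = j+1 := by omega
    have h3 : min k (j+1) = k := by omega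
    have h4 : max k (j+1) = j+1 := by omega
    have h5 : min k j = k := by omega
    have h6 : max k j = j := by omega
    have hd1 : Nat.dist (k+1) (j+1) = j-k := by rw [Nat.dist]; omega
    have hd2 : Nat.dist k (j+1) = (j-k)+1 := by rw [Nat.dist]; omega
    have hd3 : Nat.dist k j = j-k := by rw [Nat.dist]; omega
    rw [h1, h2, h3, h4, h5, h6, hd1, hd2, hd3]
    have hB := lag_B k (j-k) (-(a*b))
    have hcast : ((j-k : ℕ) : ℂ) = (j:ℂ) - (k:ℂ) := by
      push_cast [Nat.cast_sub hjk]; ring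
    rw [hcast] at hB
    have hfac : (((j+1).factorial : ℕ) : ℂ) = ((j:ℂ)+1) * (j.factorial : ℂ) := by
      push_cast [Nat.factorial_succ]; ring
    rw [hfac]
    have hjf : ((j.factorial : ℕ) : ℂ) ≠ 0 := Nat.cast_ne_zero.2 j.factorial_ne_zero
    have hj1 : ((j:ℂ)+1) ≠ 0 := by
      have : ((j:ℂ)+1) = ((j+1 : ℕ) : ℂ) := by push_cast; ring
      rw [this]; exact Nat.cast_ne_zero.2 (Nat.succ_ne_zero j)
    push_cast
    have e1 : min ((k:ℤ)+1) ((j:ℤ)+1) = (k:ℤ)+1 := by omega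
    have e2 : min ((k:ℤ)) ((j:ℤ)+1) = (k:ℤ) := by omega
    have e3 : min ((k:ℤ)) ((j:ℤ)) = (k:ℤ) := by omega
    rw [e1, e2, e3]
    rw [show (-((k:ℤ)+1)) = (-(k:ℤ)) + (-1) by ring, zpow_add₀ hx, zpow_neg_one]
    have hP : (a*b) ^ (-(k:ℤ)) ≠ 0 := zpow_ne_zero _ hx
    generalize hPd : (a*b) ^ (-(k:ℤ)) = P at hP ⊢
    have hk1 : ((k:ℂ)+1) ≠ 0 := by
      have : ((k:ℂ)+1) = ((k+1 : ℕ) : ℂ) := by push_cast; ring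
      rw [this]; exact Nat.cast_ne_zero.2 (Nat.succ_ne_zero k)
    have hL : lag (k+1) (j-k) (-(a*b))
        = (((k:ℂ) + ((j:ℂ) - (k:ℂ)) + 1) * lag k (j-k) (-(a*b))
            + (a*b) * lag k ((j-k)+1) (-(a*b))) / ((k:ℂ)+1) := by
      field_simp
      linear_combination hB
    rw [hL]
    field_simp
    ring
end step

lemma gSummable (k : ℕ) (a b a' b' : ℂ) :
    Summable (fun j : ℕ => ‖gTerm k 0 a b a' b' j‖) := by
  rw [← summable_nat_add_iff k]
  set M : ℝ := ‖a*b'‖^k * ‖(a*b) ^ (-(k:ℤ))‖ *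
    (∑ q ∈ Finset.range (k+1), ‖a*b‖^q / (q.factorial : ℝ)) with hM
  have key : ∀ j : ℕ, ‖gTerm k 0 a b a' b' (j+k)‖ ≤ M * (‖a*b'‖^j / (j.factorial : ℝ)) := by
    intro j
    rw [gTerm_zero]
    have h1 : min k (j+k) = k := by omega
    have h2 : max k (j+k) = j+k := by omega
    have hd : Nat.dist k (j+k) = j := by rw [Nat.dist]; omega
    have e1 : ((k:ℤ) ⊓ (((j+k:ℕ)):ℤ)) = (k:ℤ) := by push_cast; omega
    rw [h1, h2, hd, e1]
    rw [norm_div, norm_mul, norm_mul]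
    have hnat : ‖(((j+k).factorial : ℕ) : ℂ)‖ = ((j+k).factorial : ℝ) := by
      simp
    rw [hnat, norm_pow]
    -- bound the lag norm
    have hlag : ‖lag k j (-(a*b))‖ ≤ ∑ q ∈ Finset.range (k+1),
        ((k+j).choose (k-q) : ℝ) * ‖a*b‖^q / (q.factorial : ℝ) := by
      unfold lag
      refine le_trans (norm_sum_le _ _) ?_
      apply Finset.sum_le_sum
      intro q hq
      rw [norm_div, norm_mul]
      simp [norm_pow]
    have hfaccomp : ∀ q ∈ Finset.range (k+1),
        ((k+j).choose (k-q) : ℝ) * ‖a*b‖^q / (q.factorial : ℝ) / ((j+k).factorial : ℝ)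
          ≤ ‖a*b‖^q / (q.factorial : ℝ) / (j.factorial : ℝ) := by
      intro q hq
      have hchoose : (k+j).choose (k-q) * j.factorial ≤ (j+k).factorial := by
        have hle : k - q ≤ k + j := by omega
        have := Nat.choose_mul_factorial_mul_factorial hle
        have h2 : j.factorial ≤ (k-q).factorial * (k+j-(k-q)).factorial := by
          calc j.factorial ≤ (k+j-(k-q)).factorial := by
                apply Nat.factorial_le; omega
            _ ≤ (k-q).factorial * (k+j-(k-q)).factorial :=
                Nat.le_mul_of_pos_left _ (k-q).factorial_pos
        calc (k+j).choose (k-q) * j.factorial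
            ≤ (k+j).choose (k-q) * ((k-q).factorial * (k+j-(k-q)).factorial) :=
              Nat.mul_le_mul_left _ h2
          _ = (k+j).factorial := by rw [← this]; ring
          _ = (j+k).factorial := by rw [Nat.add_comm]
      rw [div_div, div_div, div_le_div_iff₀ (by positivity) (by positivity)]
      have hc : ((k+j).choose (k-q) : ℝ) * (j.factorial:ℝ) ≤ ((j+k).factorial : ℝ) := by
        exact_mod_cast hchoose
      calc ((k+j).choose (k-q) : ℝ) * ‖a*b‖^q * ((q.factorial:ℝ) * (j.factorial:ℝ))
          = (‖a*b‖^q * (q.factorial:ℝ)) * (((k+j).choose (k-q) : ℝ) * (j.factorial:ℝ)) := by ring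
        _ ≤ (‖a*b‖^q * (q.factorial:ℝ)) * ((j+k).factorial : ℝ) :=
            mul_le_mul_of_nonneg_left hc (by positivity)
        _ = ‖a*b‖^q * ((q.factorial:ℝ) * ((j+k).factorial:ℝ)) := by ring
    have hLb : ‖lag k j (-(a*b))‖ / (((j+k).factorial : ℕ) : ℝ)
        ≤ (∑ q ∈ Finset.range (k+1), ‖a*b‖^q / (q.factorial : ℝ)) / ((j.factorial:ℕ) : ℝ) := by
      calc ‖lag k j (-(a*b))‖ / (((j+k).factorial : ℕ) : ℝ)
          ≤ (∑ q ∈ Finset.range (k+1),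
              ((k+j).choose (k-q) : ℝ) * ‖a*b‖^q / (q.factorial : ℝ)) / (((j+k).factorial:ℕ) : ℝ) := by
            gcongr
        _ = ∑ q ∈ Finset.range (k+1),
              ((k+j).choose (k-q) : ℝ) * ‖a*b‖^q / (q.factorial : ℝ) / (((j+k).factorial:ℕ):ℝ) :=
            Finset.sum_div _ _ _
        _ ≤ ∑ q ∈ Finset.range (k+1),
              ‖a*b‖^q / (q.factorial : ℝ) / ((j.factorial:ℕ):ℝ) :=
            Finset.sum_le_sum hfaccomp
        _ = (∑ q ∈ Finset.range (k+1), ‖a*b‖^q / (q.factorial : ℝ)) / ((j.factorial:ℕ) : ℝ) :=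
            (Finset.sum_div _ _ _).symm
    calc ‖a*b'‖^(j+k) * ‖(a*b) ^ (-(k:ℤ))‖ * ‖lag k j (-(a*b))‖ / (((j+k).factorial:ℕ) : ℝ)
        = (‖a*b'‖^(j+k) * ‖(a*b) ^ (-(k:ℤ))‖) * (‖lag k j (-(a*b))‖ / (((j+k).factorial:ℕ):ℝ)) := by
          ring
      _ ≤ (‖a*b'‖^(j+k) * ‖(a*b) ^ (-(k:ℤ))‖) *
            ((∑ q ∈ Finset.range (k+1), ‖a*b‖^q / (q.factorial : ℝ)) / ((j.factorial:ℕ) : ℝ)) :=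
          mul_le_mul_of_nonneg_left hLb (by positivity)
      _ = M * (‖a*b'‖^j / (j.factorial : ℝ)) := by rw [hM, pow_add]; ring
  have hsum : Summable (fun j : ℕ => M * (‖a*b'‖^j / (j.factorial : ℝ))) :=
    (Real.summable_pow_div_factorial ‖a*b'‖).mul_left M
  exact Summable.of_nonneg_of_le (fun j => norm_nonneg _) key hsum


theorem g_rec_one (k : ℕ) (a b a' b' : ℂ)
    (ha : a ≠ 0) (hb : b ≠ 0) (ha' : a' ≠ 0) (hb' : b' ≠ 0) :
    Summable (fun j : ℕ => ‖gTerm (k + 1) 0 a b a' b' j‖) ∧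
    Summable (fun j : ℕ => ‖gTerm k 0 a b a' b' j‖) ∧
      gkl (k + 1) 0 a b a' b' = ((b + b') / (k + 1 : ℂ)) * gkl k 0 a b a' b' := by
  refine ⟨gSummable (k+1) a b a' b', gSummable k a b a' b', ?_⟩
  have hs1 : Summable (fun j : ℕ => gTerm (k+1) 0 a b a' b' j) :=
    (gSummable (k+1) a b a' b').of_norm
  have hs2 : Summable (fun j : ℕ => gTerm k 0 a b a' b' j) :=
    (gSummable k a b a' b').of_norm
  set T : ℕ → ℂ := fun j => gTerm k 0 a b a' b' j with hT
  let V : ℕ → ℂ := fun j => Nat.rec 0 (fun i _ => (a*b') * T i) j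
  have hV0 : V 0 = 0 := rfl
  have hVs : ∀ j : ℕ, V (j+1) = (a*b') * T j := fun j => rfl
  have hsV : Summable V := by
    rw [← summable_nat_add_iff 1]
    simpa using hs2.mul_left (a*b')
  have key : ((k:ℂ)+1) * (a*b) * (∑' j : ℕ, gTerm (k+1) 0 a b a' b' j)
      = (a*b) * (∑' j : ℕ, T j) + (a*b') * (∑' j : ℕ, T j) := by
    rw [← tsum_mul_left]
    have congrj : ∀ j : ℕ,
        ((k:ℂ)+1) * (a*b) * gTerm (k+1) 0 a b a' b' j = (a*b) * T j + V j := by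
      intro j
      cases j with
      | zero => rw [step0 k a b a' b', hV0, add_zero]
      | succ i => rw [stepS k a b a' b' ha hb i, hVs]
    calc ∑' j : ℕ, ((k:ℂ)+1)*(a*b)*gTerm (k+1) 0 a b a' b' j
        = ∑' j : ℕ, ((a*b)*T j + V j) := tsum_congr congrj
      _ = (∑' j : ℕ, (a*b)*T j) + ∑' j : ℕ, V j := Summable.tsum_add (hs2.mul_left _) hsV
      _ = (a*b)*(∑' j : ℕ, T j) + (a*b') * (∑' j : ℕ, T j) := by
          rw [tsum_mul_left]
          congr 1
          rw [Summable.tsum_eq_zero_add hsV, hV0, zero_add]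
          calc ∑' j : ℕ, V (j+1) = ∑' j : ℕ, (a*b') * T j := by
                exact tsum_congr hVs
            _ = (a*b') * ∑' j : ℕ, T j := tsum_mul_left
  unfold gkl
  simp only [pow_zero, one_mul]
  have hk1 : ((k:ℂ)+1) ≠ 0 := by
    have : ((k:ℂ)+1) = ((k+1 : ℕ) : ℂ) := by push_cast; ring
    rw [this]; exact Nat.cast_ne_zero.2 (Nat.succ_ne_zero k)
  rw [div_mul_eq_mul_div, eq_div_iff hk1]
  apply mul_left_cancel₀ ha
  linear_combination (b^k) * key
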